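/- If f and g are polynomials over a commutative ring R with formal degrees n and m satisfying n + m ≥ 1, then there exist polynomials p, q ∈ R[X] with deg(p) < m and deg(q) < n such that res_{n,m}(f,g) = p·f + q·g. -/

import Mathlib

open Polynomial

/-- The Sylvester matrix of `f` and `g` with respect to the formal degrees `n` and `m`:
the `(n+m) × (n+m)` matrix whose first `m` columns contain the shifted coefficient
sequences of `f` (written with formal degree `n`) and whose last `n` columns contain
the shifted coefficient sequences of `g` (written with formal degree `m`). -/
def sylvesterMatrix {R : Type*} [CommRing R] (n m : ℕ) (f g : Polynomial R) :
    Matrix (Fin (n + m)) (Fin (n + m)) R :=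
  Matrix.of fun i j =>
    if (j : ℕ) < m then
      (if (j : ℕ) ≤ (i : ℕ) ∧ (i : ℕ) ≤ (j : ℕ) + n then f.coeff (n + (j : ℕ) - (i : ℕ)) else 0)
    else
      (if (j : ℕ) - m ≤ (i : ℕ) ∧ (i : ℕ) ≤ ((j : ℕ) - m) + m then
        g.coeff (m + ((j : ℕ) - m) - (i : ℕ)) else 0)

/-- The resultant `res_{n,m}(f,g)` of `f` and `g` with respect to the formal degrees
`n` and `m`: the determinant of the corresponding Sylvester matrix. -/
def res {R : Type*} [CommRing R] (n m : ℕ) (f g : Polynomial R) : R :=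
  (sylvesterMatrix n m f g).det

private lemma helper_sum {R : Type*} [CommRing R] (f : Polynomial R) (n m j : ℕ)
    (hf : f.natDegree ≤ n) (hj : j < m) :
    ∑ i ∈ Finset.range (n + m),
        X ^ (n + m - 1 - i) * (if j ≤ i ∧ i ≤ j + n then C (f.coeff (n + j - i)) else 0)
      = X ^ (m - 1 - j) * f := by
  have h1 : ∑ i ∈ Finset.range (n + m),
      X ^ (n + m - 1 - i) * (if j ≤ i ∧ i ≤ j + n then C (f.coeff (n + j - i)) else 0)
      = ∑ i ∈ Finset.Icc j (j + n), X ^ (n + m - 1 - i) * C (f.coeff (n + j - i)) := by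
    simp_rw [mul_ite, mul_zero]
    rw [← Finset.sum_filter]
    apply Finset.sum_congr
    · ext i; simp only [Finset.mem_filter, Finset.mem_range, Finset.mem_Icc]; omega
    · intros; rfl
  rw [h1]
  have h2 : X ^ (m - 1 - j) * f
      = ∑ k ∈ Finset.range (n + 1), X ^ (m - 1 - j + k) * C (f.coeff k) := by
    conv_lhs => rw [f.as_sum_range' (n + 1) (Nat.lt_succ_of_le hf)]
    rw [Finset.mul_sum]
    refine Finset.sum_congr rfl fun k _ => ?_
    rw [← C_mul_X_pow_eq_monomial, pow_add]; ring
  rw [h2]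
  refine Finset.sum_nbij' (fun i => n + j - i) (fun k => n + j - k) ?_ ?_ ?_ ?_ ?_
  · intro a ha; simp only [Finset.mem_Icc] at ha; simp only [Finset.mem_range]; omega
  · intro a ha; simp only [Finset.mem_range] at ha; simp only [Finset.mem_Icc]; omega
  · intro a ha; simp only [Finset.mem_Icc] at ha; show n + j - (n + j - a) = a; omega
  · intro a ha; simp only [Finset.mem_range] at ha; show n + j - (n + j - a) = a; omega
  · intro a ha; simp only [Finset.mem_Icc] at ha
    show X ^ (n + m - 1 - a) * C (f.coeff (n + j - a))
        = X ^ (m - 1 - j + (n + j - a)) * C (f.coeff (n + j - a))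
    congr 2
    omega



/-- if `n + m ≥ 1` then there are polynomials `p, q` with
`deg p < m`, `deg q < n` and `res_{n,m}(f,g) = p·f + q·g`. -/
theorem res_mem_span {R : Type*} [CommRing R] (n m : ℕ) (f g : Polynomial R)
    (hf : f.natDegree ≤ n) (hg : g.natDegree ≤ m) (hnm : 1 ≤ n + m) :
    ∃ p q : Polynomial R, p.degree < (m : ℕ) ∧ q.degree < (n : ℕ) ∧
      C (res n m f g) = p * f + q * g := by
  classical
  set S := sylvesterMatrix n m f g with hS
  set T : Matrix (Fin (n + m)) (Fin (n + m)) (Polynomial R) :=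
    (C : R →+* Polynomial R).mapMatrix S with hT
  set u : Fin (n + m) → Polynomial R := fun i => X ^ (n + m - 1 - (i : ℕ)) with hu
  set last : Fin (n + m) := ⟨n + m - 1, by omega⟩ with hlast
  -- the key row computation
  have key : ∀ j : Fin (n + m), Matrix.vecMul u T j =
      if (j : ℕ) < m then X ^ (m - 1 - (j : ℕ)) * f
      else X ^ (n - 1 - ((j : ℕ) - m)) * g := by
    intro j
    rw [Matrix.vecMul, dotProduct]
    by_cases hj : (j : ℕ) < m
    · rw [if_pos hj, ← helper_sum f n m (j : ℕ) hf hj,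
        ← Fin.sum_univ_eq_sum_range (fun i => X ^ (n + m - 1 - i) *
          (if (j : ℕ) ≤ i ∧ i ≤ (j : ℕ) + n then C (f.coeff (n + (j : ℕ) - i)) else 0))]
      refine Finset.sum_congr rfl fun i _ => ?_
      simp only [hT, hS, hu, RingHom.mapMatrix_apply, Matrix.map_apply, sylvesterMatrix,
        Matrix.of_apply, if_pos hj, apply_ite C, map_zero]
    · rw [if_neg hj]
      have hj' : (j : ℕ) - m < n := by omega
      have := helper_sum g m n ((j : ℕ) - m) hg hj'
      rw [← this, ← Fin.sum_univ_eq_sum_range (fun i => X ^ (m + n - 1 - i) *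
          (if (j : ℕ) - m ≤ i ∧ i ≤ (j : ℕ) - m + m then C (g.coeff (m + ((j : ℕ) - m) - i)) else 0))]
      have hcast : ∀ i : Fin (n + m), ((Fin.cast (by omega : n + m = m + n) i : Fin (m + n)) : ℕ) = (i : ℕ) := fun i => rfl
      refine Finset.sum_nbij' (fun i => Fin.cast (by omega) i) (fun i => Fin.cast (by omega) i)
        (fun _ _ => Finset.mem_univ _) (fun _ _ => Finset.mem_univ _)
        (fun _ _ => rfl) (fun _ _ => rfl) (fun i _ => ?_)
      simp only [hT, hS, hu, RingHom.mapMatrix_apply, Matrix.map_apply, sylvesterMatrix,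
        Matrix.of_apply, if_neg hj, apply_ite C, map_zero, hcast]
      congr 2
      omega
  -- the adjugate identity
  have main : T.det = ∑ j : Fin (n + m), Matrix.vecMul u T j * T.adjugate j last := by
    have h1 : Matrix.vecMul (Matrix.vecMul u T) T.adjugate = T.det • u := by
      rw [Matrix.vecMul_vecMul, Matrix.mul_adjugate]
      funext j
      simp [Matrix.vecMul, dotProduct, Matrix.one_apply, mul_ite, mul_comm]
    have h2 := congrFun h1 last
    rw [Matrix.vecMul, dotProduct] at h2
    have hulast : u last = 1 := by
      simp only [hu, hlast]
      rw [Nat.sub_self, pow_zero]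
    rw [h2]
    simp [hulast]
  have hdetT : T.det = C (res n m f g) := by
    rw [res, ← hS, ← RingHom.map_det]
  have hadj : ∀ j, T.adjugate j last = C (S.adjugate j last) := by
    intro j
    rw [hT, ← RingHom.map_adjugate]; rfl
  -- define p and q
  set p : Polynomial R := ∑ j ∈ Finset.univ.filter (fun j : Fin (n + m) => (j : ℕ) < m),
    C (S.adjugate j last) * X ^ (m - 1 - (j : ℕ)) with hp
  set q : Polynomial R := ∑ j ∈ Finset.univ.filter (fun j : Fin (n + m) => ¬ (j : ℕ) < m),
    C (S.adjugate j last) * X ^ (n - 1 - ((j : ℕ) - m)) with hq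
  refine ⟨p, q, ?_, ?_, ?_⟩
  · refine lt_of_le_of_lt (Polynomial.degree_sum_le _ _) ?_
    rw [Finset.sup_lt_iff (by exact WithBot.bot_lt_coe m)]
    intro j hjmem
    simp only [Finset.mem_filter] at hjmem
    refine lt_of_le_of_lt (Polynomial.degree_C_mul_X_pow_le _ _) ?_
    exact_mod_cast (by omega : m - 1 - (j : ℕ) < m)
  · refine lt_of_le_of_lt (Polynomial.degree_sum_le _ _) ?_
    rw [Finset.sup_lt_iff (by exact WithBot.bot_lt_coe n)]
    intro j hjmem
    simp only [Finset.mem_filter] at hjmem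
    have hj' : (j : ℕ) - m < n := by
      have := j.isLt; omega
    refine lt_of_le_of_lt (Polynomial.degree_C_mul_X_pow_le _ _) ?_
    exact_mod_cast (by omega : n - 1 - ((j : ℕ) - m) < n)
  · rw [← hdetT, main]
    rw [← Finset.sum_filter_add_sum_filter_not Finset.univ (fun j : Fin (n + m) => (j : ℕ) < m)]
    rw [hp, hq, Finset.sum_mul, Finset.sum_mul]
    refine congrArg₂ (· + ·) ?_ ?_
    · refine Finset.sum_congr rfl fun j hj => ?_
      simp only [Finset.mem_filter] at hj
      rw [key j, if_pos hj.2, hadj]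
      ring
    · refine Finset.sum_congr rfl fun j hj => ?_
      simp only [Finset.mem_filter] at hj
      rw [key j, if_neg hj.2, hadj]
      ring
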